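/- Let α, β ∈ ℝ with α ≠ 0 and β ≠ 0, and let u, w : ℝ² → ℝ be smooth functions of (x,y) satisfying the hydrodynamic-type system u_y + w u_x = (2α)⁻¹ w_x and w_y = (2α/(3β)) w_x − w w_x − 2α u u_x everywhere. Then the pair of reduction equations holds with v_x replaced by w: namely ∂_y(u_y + u_x w) + ∂_x(u_y w + u_x w² + u u_x) = (3β)⁻¹ w_{xx}. -/

import Mathlib

/-- Partial derivative in `x` of a function on `ℝ² = (x,y)`. -/
noncomputable def pdx (f : ℝ × ℝ → ℝ) (q : ℝ × ℝ) : ℝ :=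
  deriv (fun s => f (s, q.2)) q.1

/-- Partial derivative in `y` of a function on `ℝ² = (x,y)`. -/
noncomputable def pdy (f : ℝ × ℝ → ℝ) (q : ℝ × ℝ) : ℝ :=
  deriv (fun s => f (q.1, s)) q.2

section aux

variable {E : Type*} [NormedAddCommGroup E] [NormedSpace ℝ E]

lemma hasDerivAt_x (Φ : ℝ × ℝ → E) (hΦ : Differentiable ℝ Φ) (q : ℝ × ℝ) :
    HasDerivAt (fun s => Φ (s, q.2)) (fderiv ℝ Φ q ((1 : ℝ), (0 : ℝ))) q.1 := by
  have h := (hΦ (q.1, q.2)).hasFDerivAt.comp_hasDerivAt q.1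
    ((hasDerivAt_id q.1).prodMk (hasDerivAt_const q.1 q.2))
  simpa [Function.comp_def] using h

lemma hasDerivAt_y (Φ : ℝ × ℝ → E) (hΦ : Differentiable ℝ Φ) (q : ℝ × ℝ) :
    HasDerivAt (fun s => Φ (q.1, s)) (fderiv ℝ Φ q ((0 : ℝ), (1 : ℝ))) q.2 := by
  have h := (hΦ (q.1, q.2)).hasFDerivAt.comp_hasDerivAt q.2
    ((hasDerivAt_const q.2 q.1).prodMk (hasDerivAt_id q.2))
  simpa [Function.comp_def] using h

end aux

lemma pdx_eq (f : ℝ × ℝ → ℝ) (hf : Differentiable ℝ f) (q : ℝ × ℝ) :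
    pdx f q = fderiv ℝ f q ((1 : ℝ), (0 : ℝ)) :=
  (hasDerivAt_x f hf q).deriv

lemma pdy_eq (f : ℝ × ℝ → ℝ) (hf : Differentiable ℝ f) (q : ℝ × ℝ) :
    pdy f q = fderiv ℝ f q ((0 : ℝ), (1 : ℝ)) :=
  (hasDerivAt_y f hf q).deriv

/-- If `u`, `w` satisfy the hydrodynamic-type system
`u_y + w u_x = (2α)⁻¹ w_x`, `w_y = (2α/(3β)) w_x − w w_x − 2α u u_x`, then the order `k = 3`
reduction equation holds with `v_x` replaced by `w`:
`∂_y(u_y + u_x w) + ∂_x(u_y w + u_x w² + u u_x) = (3β)⁻¹ w_{xx}`. -/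
theorem order_three_reduction_from_hydrodynamic_system (α β : ℝ) (hα : α ≠ 0) (hβ : β ≠ 0)
    (u w : ℝ × ℝ → ℝ) (hu : ContDiff ℝ (⊤ : ℕ∞) u) (hw : ContDiff ℝ (⊤ : ℕ∞) w)
    (h1 : ∀ q : ℝ × ℝ, pdy u q + w q * pdx u q = (2 * α)⁻¹ * pdx w q)
    (h2 : ∀ q : ℝ × ℝ,
      pdy w q = (2 * α / (3 * β)) * pdx w q - w q * pdx w q - 2 * α * u q * pdx u q) :
    ∀ q : ℝ × ℝ,
      pdy (fun s => pdy u s + pdx u s * w s) q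
        + pdx (fun s => pdy u s * w s + pdx u s * (w s) ^ 2 + u s * pdx u s) q
        = (3 * β)⁻¹ * pdx (pdx w) q := by
  intro q
  have hw' : Differentiable ℝ w := hw.differentiable (by simp)
  have hW : Differentiable ℝ (fderiv ℝ w) :=
    (hw.fderiv_right (m := (⊤ : ℕ∞)) (by exact_mod_cast le_top)).differentiable (by simp)
  set D := fderiv ℝ (fderiv ℝ w) q with hD
  -- symmetry of second derivatives
  have hsym : D ((0:ℝ), (1:ℝ)) ((1:ℝ), (0:ℝ)) = D ((1:ℝ), (0:ℝ)) ((0:ℝ), (1:ℝ)) :=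
    second_derivative_symmetric (fun y => (hw' y).hasFDerivAt) (hW q).hasFDerivAt _ _
  -- first bracket equals (2α)⁻¹ w_x as functions
  have hF : (fun s => pdy u s + pdx u s * w s)
      = fun s => (2 * α)⁻¹ * (fderiv ℝ w s ((1:ℝ), (0:ℝ))) := by
    funext s
    rw [← pdx_eq w hw' s, mul_comm (pdx u s) (w s)]
    exact h1 s
  -- second bracket equals (3β)⁻¹ w_x - (2α)⁻¹ w_y as functions
  have hG : (fun s => pdy u s * w s + pdx u s * (w s) ^ 2 + u s * pdx u s)
      = fun s => (3 * β)⁻¹ * (fderiv ℝ w s ((1:ℝ), (0:ℝ)))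
          - (2 * α)⁻¹ * (fderiv ℝ w s ((0:ℝ), (1:ℝ))) := by
    funext s
    rw [← pdx_eq w hw' s, ← pdy_eq w hw' s]
    have e1 := h1 s
    have e2 := h2 s
    field_simp at e1 e2 ⊢
    linear_combination (3 * β * w s) * e1 + e2
  rw [hF, hG]
  -- compute the derivatives
  have hx : HasDerivAt (fun s : ℝ => fderiv ℝ w (s, q.2))
      (D ((1:ℝ), (0:ℝ))) q.1 := hasDerivAt_x (fderiv ℝ w) hW q
  have hy : HasDerivAt (fun s : ℝ => fderiv ℝ w (q.1, s))
      (D ((0:ℝ), (1:ℝ))) q.2 := hasDerivAt_y (fderiv ℝ w) hW q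
  have hx10 : HasDerivAt (fun s : ℝ => fderiv ℝ w (s, q.2) ((1:ℝ), (0:ℝ)))
      (D ((1:ℝ), (0:ℝ)) ((1:ℝ), (0:ℝ))) q.1 := by
    simpa using hx.clm_apply (hasDerivAt_const q.1 ((1:ℝ), (0:ℝ)))
  have hx01 : HasDerivAt (fun s : ℝ => fderiv ℝ w (s, q.2) ((0:ℝ), (1:ℝ)))
      (D ((1:ℝ), (0:ℝ)) ((0:ℝ), (1:ℝ))) q.1 := by
    simpa using hx.clm_apply (hasDerivAt_const q.1 ((0:ℝ), (1:ℝ)))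
  have hy10 : HasDerivAt (fun s : ℝ => fderiv ℝ w (q.1, s) ((1:ℝ), (0:ℝ)))
      (D ((0:ℝ), (1:ℝ)) ((1:ℝ), (0:ℝ))) q.2 := by
    simpa using hy.clm_apply (hasDerivAt_const q.2 ((1:ℝ), (0:ℝ)))
  have hpy : pdy (fun s => (2 * α)⁻¹ * (fderiv ℝ w s ((1:ℝ), (0:ℝ)))) q
      = (2 * α)⁻¹ * (D ((0:ℝ), (1:ℝ)) ((1:ℝ), (0:ℝ))) :=
    (hy10.const_mul ((2 * α)⁻¹)).deriv
  have hpxG : pdx (fun s => (3 * β)⁻¹ * (fderiv ℝ w s ((1:ℝ), (0:ℝ)))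
        - (2 * α)⁻¹ * (fderiv ℝ w s ((0:ℝ), (1:ℝ)))) q
      = (3 * β)⁻¹ * (D ((1:ℝ), (0:ℝ)) ((1:ℝ), (0:ℝ)))
        - (2 * α)⁻¹ * (D ((1:ℝ), (0:ℝ)) ((0:ℝ), (1:ℝ))) :=
    ((hx10.const_mul ((3 * β)⁻¹)).sub (hx01.const_mul ((2 * α)⁻¹))).deriv
  have hpxx : pdx (pdx w) q = D ((1:ℝ), (0:ℝ)) ((1:ℝ), (0:ℝ)) := by
    have hfun : pdx w = fun s => fderiv ℝ w s ((1:ℝ), (0:ℝ)) := funext (pdx_eq w hw')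
    rw [hfun]
    exact hx10.deriv
  rw [hpy, hpxG, hpxx, hsym]
  ring
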